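/- (The observability-constrained Schmidt invariant Kalman filter preserves the ten-dimensional unobservable subspace.) Fix g, p_F ∈ ℝ³ with g ≠ 0 and a first-estimate matrix R̂_{G0} ∈ ℝ^{3×3}. Then the 33×10 matrix N*₃ has rank 10, so N*₃ᵀ N*₃ is invertible. Let T ∈ ℕ, δ₁, …, δ_T ∈ ℝ, and for each t ∈ {0, …, T} let R̂_{I,t}, R̂_{G,t}, R_{KF} ∈ ℝ^{3×3}, v̂_t, p̂_{I,t}, p̂_{f,t}, p̂_{G,t} ∈ ℝ³ and J_t, J'_t, J*_t ∈ ℝ^{2×3} be arbitrary. Define A*_t with the step-t estimates, Φ*_{t|0} = exp(δ_t A*_t) ⋯ exp(δ₁ A*₁) (Φ*_{0|0} = I), H_{L,t} = −J_t R̂_{I,t}ᵀ [0₃ 0₃ I₃ −I₃ 0₃ 0₃ 0₃ 0₃ 0₃ 0₃ 0₃], H^C_t = −J'_t R̂_{I,t}ᵀ [−(R̂_{G,t} p_F)_× 0₃ I₃ 0₃ −I₃ (R̂_{G,t} p_F)_× 0₃ 0₃ 0₃ 0₃ −R̂_{G,t}], H^{KF}_t = −J*_t R_{KF}ᵀ [0₃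 0₃ 0₃ 0₃ 0₃ 0₃ 0₃ 0₃ −(p_F)_× I₃ −I₃], and the observability-constrained modified Jacobian H^{C*}_t = H^C_t − H^C_t N*₃ (N*₃ᵀ N*₃)⁻¹ N*₃ᵀ. Then for every t: H_{L,t} Φ*_{t|0} N*₃ = 0, H^{C*}_t Φ*_{t|0} N*₃ = 0, and H^{KF}_t Φ*_{t|0} N*₃ = 0; i.e., all block rows of the observability matrix built from the modified Jacobians annihilate N*₃, so the ten unobservable directions are preserved for arbitrary (ever-changing) estimates. -/

import Mathlib

open Matrix

abbrev V3 := Fin 3 → ℝ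
abbrev M3 := Matrix (Fin 3) (Fin 3) ℝ

/-- The cross-product (skew-symmetric) matrix `(a)_×`. -/
def skew (a : V3) : M3 :=
  !![0, -a 2, a 1; a 2, 0, -a 0; -a 1, a 0, 0]

/-- Row/column index of the 33-dimensional right-invariant error
`(ξ_θ, ξ_v, ξ_p, ξ_pf, ξ_pG, ξ_θG, ξ_bg, ξ_ba, ξ_θKF, ξ_pKF, ξ_F)`: 11 blocks of 3. -/
abbrev Idx33 := Fin 11 × Fin 3

/-- Column index for the 33×10 unobservable-direction matrix:
one single column followed by three 3-column blocks. -/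
abbrev Cols10 := Fin 1 ⊕ Fin 3 × Fin 3

/-- 33×33 matrix from an 11×11 table of 3×3 blocks. -/
def bm11 (f : Fin 11 → Fin 11 → M3) : Matrix Idx33 Idx33 ℝ :=
  Matrix.of fun p q => f p.1 q.1 p.2 q.2

/-- The 33×33 propagation matrix `A*` of the imperfect augmented system:
the upper-left 24×24 block is the perfect-system propagation matrix,
all other entries are zero. -/
def AStar (g : V3) (RI : M3) (v pI pf pG : V3) : Matrix Idx33 Idx33 ℝ :=
  bm11 ![![0, 0, 0, 0, 0, 0, -RI, 0, 0, 0, 0],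
         ![skew g, 0, 0, 0, 0, 0, -(skew v * RI), -RI, 0, 0, 0],
         ![0, 1, 0, 0, 0, 0, -(skew pI * RI), 0, 0, 0, 0],
         ![0, 0, 0, 0, 0, 0, -(skew pf * RI), 0, 0, 0, 0],
         ![0, 0, 0, 0, 0, 0, -(skew pG * RI), 0, 0, 0, 0],
         ![0, 0, 0, 0, 0, 0, 0, 0, 0, 0, 0],
         ![0, 0, 0, 0, 0, 0, 0, 0, 0, 0, 0],
         ![0, 0, 0, 0, 0, 0, 0, 0, 0, 0, 0],
         ![0, 0, 0, 0, 0, 0, 0, 0, 0, 0, 0],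
         ![0, 0, 0, 0, 0, 0, 0, 0, 0, 0, 0],
         ![0, 0, 0, 0, 0, 0, 0, 0, 0, 0, 0]]

/-- The 33×10 unobservable-direction matrix `N*₁` (parametric in `R_G`; `N*₃` is the
same matrix evaluated at the first-estimate `R̂_{G0}`). -/
def NStar1 (g pF : V3) (RG : M3) : Matrix Idx33 Cols10 ℝ :=
  Matrix.of fun p j =>
    Sum.elim
      (fun _ => (![g, 0, 0, 0, 0, g, 0, 0, 0, 0, 0] : Fin 11 → V3) p.1 p.2)
      (fun q =>
        (![![0, 0, 0], ![0, 0, 0], ![1, 0, 0], ![1, 0, 0], ![1, -RG, 0],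
           ![0, 0, 1], ![0, 0, 0], ![0, 0, 0], ![0, 0, -RGᵀ], ![0, 1, 0],
           ![0, 1, skew pF * RGᵀ]] : Fin 11 → Fin 3 → M3) p.1 q.1 p.2 q.2) j

/-- A 2×33 measurement Jacobian `B ⬝ [f₀ ⋯ f₁₀]` from a 2×3 factor `B`
and an 11-tuple of 3×3 blocks. -/
def rowJac (B : Matrix (Fin 2) (Fin 3) ℝ) (f : Fin 11 → M3) : Matrix (Fin 2) Idx33 ℝ :=
  Matrix.of fun r p => (B * f p.1) r p.2

/-- The state-transition matrix `Φ*_{t|0} = exp(δ_t A*_t) ⋯ exp(δ₁ A*₁)`, `Φ*_{0|0} = I`. -/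
noncomputable def PhiStar (δ : ℕ → ℝ) (As : ℕ → Matrix Idx33 Idx33 ℝ) :
    ℕ → Matrix Idx33 Idx33 ℝ
  | 0 => 1
  | t + 1 => NormedSpace.exp (δ (t + 1) • As (t + 1)) * PhiStar δ As t


/-! ### Auxiliary lemmas -/

@[simp] lemma cons_val_five' {α : Type*} {m : ℕ} (x : α) (u : Fin (m+5) → α) :
    vecCons x u 5 = vecHead (vecTail (vecTail (vecTail (vecTail u)))) := rfl
@[simp] lemma cons_val_six' {α : Type*} {m : ℕ} (x : α) (u : Fin (m+6) → α) :
    vecCons x u 6 = vecHead (vecTail (vecTail (vecTail (vecTail (vecTail u))))) := rfl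
@[simp] lemma cons_val_seven' {α : Type*} {m : ℕ} (x : α) (u : Fin (m+7) → α) :
    vecCons x u 7 = vecHead (vecTail (vecTail (vecTail (vecTail (vecTail (vecTail u)))))) := rfl
@[simp] lemma cons_val_eight' {α : Type*} {m : ℕ} (x : α) (u : Fin (m+8) → α) :
    vecCons x u 8 =
      vecHead (vecTail (vecTail (vecTail (vecTail (vecTail (vecTail (vecTail u))))))) := rfl
@[simp] lemma cons_val_nine' {α : Type*} {m : ℕ} (x : α) (u : Fin (m+9) → α) :
    vecCons x u 9 =
      vecHead (vecTail (vecTail (vecTail (vecTail (vecTail (vecTail (vecTail (vecTail u)))))))) :=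
  rfl
@[simp] lemma cons_val_ten' {α : Type*} {m : ℕ} (x : α) (u : Fin (m+10) → α) :
    vecCons x u 10 =
      vecHead (vecTail (vecTail (vecTail (vecTail (vecTail (vecTail (vecTail
        (vecTail (vecTail u))))))))) := rfl

@[simp] lemma vecHead_const' {α : Type*} {m : ℕ} (a : α) :
    vecHead (fun _ : Fin (m+1) => a) = a := rfl
@[simp] lemma vecTail_const' {α : Type*} {m : ℕ} (a : α) :
    vecTail (fun _ : Fin (m+1) => a) = fun _ : Fin m => a := rfl

/-- 33×10 matrix from a column of eleven 3-vectors and an 11×3 table of 3×3 blocks. -/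
def bmN (c : Fin 11 → V3) (D : Fin 11 → Fin 3 → M3) : Matrix Idx33 Cols10 ℝ :=
  Matrix.of fun p j => Sum.elim (fun _ => c p.1 p.2) (fun q => D p.1 q.1 p.2 q.2) j

lemma NStar1_eq_bmN (g pF : V3) (RG : M3) :
    NStar1 g pF RG = bmN ![g, 0, 0, 0, 0, g, 0, 0, 0, 0, 0]
      ![![0, 0, 0], ![0, 0, 0], ![1, 0, 0], ![1, 0, 0], ![1, -RG, 0],
        ![0, 0, 1], ![0, 0, 0], ![0, 0, 0], ![0, 0, -RGᵀ], ![0, 1, 0],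
        ![0, 1, skew pF * RGᵀ]] := rfl

lemma bmN_zero : bmN (fun _ => 0) (fun _ _ => 0) = 0 := by
  ext ⟨p, i⟩ j
  rcases j with j | ⟨q, k⟩ <;> simp [bmN]

lemma bm11_mul_bmN (F : Fin 11 → Fin 11 → M3) (c : Fin 11 → V3) (D : Fin 11 → Fin 3 → M3) :
    bm11 F * bmN c D =
      bmN (fun p => ∑ q, F p q *ᵥ c q) (fun p r => ∑ q, F p q * D q r) := by
  ext ⟨p, i⟩ j
  rcases j with j | ⟨r, k⟩ <;>
    simp [bm11, bmN, Matrix.mul_apply, Fintype.sum_prod_type, Matrix.mulVec,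
      dotProduct, Finset.sum_apply, Matrix.sum_apply]

lemma bm11_mul_bmN_eq_zero (F : Fin 11 → Fin 11 → M3) (c : Fin 11 → V3)
    (D : Fin 11 → Fin 3 → M3) (hc : ∀ p, ∑ q, F p q *ᵥ c q = 0)
    (hD : ∀ p r, ∑ q, F p q * D q r = 0) : bm11 F * bmN c D = 0 := by
  rw [bm11_mul_bmN]
  exact Eq.trans (congrArg₂ bmN (funext hc) (funext fun p => funext (hD p))) bmN_zero

/-- 3×33 matrix from an 11-tuple of 3×3 blocks. -/
def blockRow (f : Fin 11 → M3) : Matrix (Fin 3) Idx33 ℝ :=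
  Matrix.of fun i p => f p.1 i p.2

lemma rowJac_eq (B : Matrix (Fin 2) (Fin 3) ℝ) (f : Fin 11 → M3) :
    rowJac B f = B * blockRow f := by
  ext r ⟨p, i⟩
  simp [rowJac, blockRow, Matrix.mul_apply]

lemma blockRow_mul_bmN (f : Fin 11 → M3) (c : Fin 11 → V3) (D : Fin 11 → Fin 3 → M3)
    (hc : ∑ p, f p *ᵥ c p = 0) (hD : ∀ r, ∑ p, f p * D p r = 0) :
    blockRow f * bmN c D = 0 := by
  ext i j
  rcases j with j | ⟨r, k⟩
  · have h := congrFun hc i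
    simp only [Finset.sum_apply, Matrix.mulVec, dotProduct, Pi.zero_apply] at h
    simpa [blockRow, bmN, Matrix.mul_apply, Fintype.sum_prod_type] using h
  · have h := congrFun (congrFun (hD r) i) k
    simp only [Matrix.sum_apply, Matrix.mul_apply, Matrix.zero_apply] at h
    simpa [blockRow, bmN, Matrix.mul_apply, Fintype.sum_prod_type] using h

lemma rowJac_mul_bmN (B : Matrix (Fin 2) (Fin 3) ℝ) (f : Fin 11 → M3) (c : Fin 11 → V3)
    (D : Fin 11 → Fin 3 → M3) (hc : ∑ p, f p *ᵥ c p = 0) (hD : ∀ r, ∑ p, f p * D p r = 0) :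
    rowJac B f * bmN c D = 0 := by
  rw [rowJac_eq, Matrix.mul_assoc, blockRow_mul_bmN f c D hc hD, Matrix.mul_zero]

lemma skew_mulVec_self (a : V3) : skew a *ᵥ a = 0 := by
  funext i
  fin_cases i <;>
    simp [skew, Matrix.mulVec, dotProduct, Fin.sum_univ_three] <;> ring

lemma AStar_mul_NStar1 (g pF : V3) (RG0 RI : M3) (v pI pf pG : V3) :
    AStar g RI v pI pf pG * NStar1 g pF RG0 = 0 := by
  rw [NStar1_eq_bmN, AStar]
  refine bm11_mul_bmN_eq_zero _ _ _ (fun p => ?_) (fun p r => ?_)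
  · fin_cases p <;>
      simp [Fin.sum_univ_succ, skew_mulVec_self, Matrix.mulVec_zero, Matrix.zero_mulVec]
  · fin_cases p <;> fin_cases r <;>
      simp [Fin.sum_univ_succ]

lemma exp_mul_of_mul_eq_zero {n m : Type*} [Fintype n] [DecidableEq n] [Fintype m]
    (M : Matrix n n ℝ) (B : Matrix n m ℝ) (h : M * B = 0) :
    NormedSpace.exp M * B = B := by
  letI : SeminormedRing (Matrix n n ℝ) := Matrix.linftyOpSemiNormedRing
  letI : NormedRing (Matrix n n ℝ) := Matrix.linftyOpNormedRing
  letI : NormedAlgebra ℝ (Matrix n n ℝ) := Matrix.linftyOpNormedAlgebra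
  have hs : HasSum (fun k : ℕ => ((k.factorial : ℝ)⁻¹ : ℝ) • M ^ k) (NormedSpace.exp M) :=
    NormedSpace.exp_series_hasSum_exp' M
  let L : Matrix n n ℝ →L[ℝ] Matrix n m ℝ :=
    { toLinearMap :=
        { toFun := fun X => X * B
          map_add' := fun X Y => Matrix.add_mul X Y B
          map_smul' := fun c X => Matrix.smul_mul c X B }
      cont := continuous_id.matrix_mul continuous_const }
  have h2 := hs.mapL L
  have h3 : (fun k : ℕ => L (((k.factorial : ℝ)⁻¹ : ℝ) • M ^ k)) =
      fun k : ℕ => if k = 0 then B else 0 := by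
    funext k
    cases k with
    | zero => simp [L]
    | succ k =>
        simp [L, pow_succ, Matrix.mul_assoc, h, smul_mul_assoc]
  rw [show (fun k : ℕ => L (((k.factorial : ℝ)⁻¹ : ℝ) • M ^ k)) =
      (fun k : ℕ => if k = 0 then B else 0) from h3] at h2
  exact h2.unique (hasSum_ite_eq 0 B)

lemma phiStar_mul_NStar1 (g pF : V3) (RG0 : M3) (δ : ℕ → ℝ)
    (As : ℕ → Matrix Idx33 Idx33 ℝ) (hAs : ∀ s, As s * NStar1 g pF RG0 = 0) :
    ∀ t, PhiStar δ As t * NStar1 g pF RG0 = NStar1 g pF RG0 := by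
  intro t
  induction t with
  | zero => simp [PhiStar]
  | succ t ih =>
      rw [PhiStar, Matrix.mul_assoc, ih,
        exp_mul_of_mul_eq_zero _ _ (by rw [Matrix.smul_mul, hAs, smul_zero])]

lemma NStar1_mulVec_inj (g pF : V3) (hg : g ≠ 0) (RG0 : M3) (x : Cols10 → ℝ)
    (hx : NStar1 g pF RG0 *ᵥ x = 0) : x = 0 := by
  obtain ⟨i0, hi0⟩ : ∃ i, g i ≠ 0 := by
    by_contra h
    push_neg at h
    exact hg (funext fun i => h i)
  have h0 : x (Sum.inl 0) = 0 := by
    have h := congrFun hx (0, i0)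
    simp [NStar1, Matrix.mulVec, dotProduct, Fintype.sum_sum_type,
      Fintype.sum_prod_type, Fin.sum_univ_three, Fin.sum_univ_one] at h
    rcases h with h | h
    · exact absurd h hi0
    · exact h
  have h2 : ∀ i, x (Sum.inr (0, i)) = 0 := by
    intro i
    have h := congrFun hx (2, i)
    fin_cases i <;>
      simpa [NStar1, Matrix.mulVec, dotProduct, Fintype.sum_sum_type,
        Fintype.sum_prod_type, Fin.sum_univ_three, Fin.sum_univ_one,
        Matrix.one_apply] using h
  have h9 : ∀ i, x (Sum.inr (1, i)) = 0 := by
    intro i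
    have h := congrFun hx (9, i)
    fin_cases i <;>
      simpa [NStar1, Matrix.mulVec, dotProduct, Fintype.sum_sum_type,
        Fintype.sum_prod_type, Fin.sum_univ_three, Fin.sum_univ_one,
        Matrix.one_apply] using h
  have h5 : ∀ i, x (Sum.inr (2, i)) = 0 := by
    intro i
    have h := congrFun hx (5, i)
    fin_cases i <;>
      simpa [NStar1, Matrix.mulVec, dotProduct, Fintype.sum_sum_type,
        Fintype.sum_prod_type, Fin.sum_univ_three, Fin.sum_univ_one,
        Matrix.one_apply, h0] using h
  funext j
  rcases j with j | ⟨q, k⟩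
  · have : j = 0 := Subsingleton.elim _ _
    rw [this]
    exact h0
  · fin_cases q
    · exact h2 k
    · exact h9 k
    · exact h5 k

/-- The MSOC-S-IKF preserves the ten-dimensional unobservable subspace: with
`N*₃ = N*₁(R̂_{G0})` of rank 10 (so `N*₃ᵀ N*₃` is invertible), all block rows of the
observability matrix built from the observability-constrained modified Jacobians
annihilate `N*₃`, for arbitrary ever-changing estimates. -/
theorem msoc_s_ikf_preserves_unobservable_subspace (g pF : V3) (hg : g ≠ 0)
    (RG0 : M3) (T : ℕ) (δ : ℕ → ℝ) (RI RG RKF : ℕ → M3) (v pI pf pG : ℕ → V3)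
    (J J' Jstar : ℕ → Matrix (Fin 2) (Fin 3) ℝ) :
    (NStar1 g pF RG0).rank = 10 ∧
    IsUnit ((NStar1 g pF RG0)ᵀ * NStar1 g pF RG0) ∧
    ∀ t ≤ T,
      rowJac (-(J t * (RI t)ᵀ)) ![0, 0, 1, -1, 0, 0, 0, 0, 0, 0, 0] *
          PhiStar δ (fun s => AStar g (RI s) (v s) (pI s) (pf s) (pG s)) t *
          NStar1 g pF RG0 = 0 ∧
      (rowJac (-(J' t * (RI t)ᵀ))
            ![-skew (RG t *ᵥ pF), 0, 1, 0, -1, skew (RG t *ᵥ pF), 0, 0, 0, 0,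
              -(RG t)] -
          rowJac (-(J' t * (RI t)ᵀ))
              ![-skew (RG t *ᵥ pF), 0, 1, 0, -1, skew (RG t *ᵥ pF), 0, 0, 0, 0,
                -(RG t)] *
            NStar1 g pF RG0 * ((NStar1 g pF RG0)ᵀ * NStar1 g pF RG0)⁻¹ *
            (NStar1 g pF RG0)ᵀ) *
          PhiStar δ (fun s => AStar g (RI s) (v s) (pI s) (pf s) (pG s)) t *
          NStar1 g pF RG0 = 0 ∧
      rowJac (-(Jstar t * (RKF t)ᵀ))
            ![0, 0, 0, 0, 0, 0, 0, 0, -skew pF, 1, -1] *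
          PhiStar δ (fun s => AStar g (RI s) (v s) (pI s) (pf s) (pG s)) t *
          NStar1 g pF RG0 = 0 := by
  have hAs : ∀ s, AStar g (RI s) (v s) (pI s) (pf s) (pG s) * NStar1 g pF RG0 = 0 :=
    fun s => AStar_mul_NStar1 g pF RG0 (RI s) (v s) (pI s) (pf s) (pG s)
  have hPhi := phiStar_mul_NStar1 g pF RG0 δ
    (fun s => AStar g (RI s) (v s) (pI s) (pf s) (pG s)) hAs
  have hinj : ∀ x, NStar1 g pF RG0 *ᵥ x = 0 → x = 0 := NStar1_mulVec_inj g pF hg RG0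
  have hrank : (NStar1 g pF RG0).rank = 10 := by
    have h1 : Function.Injective (NStar1 g pF RG0).mulVecLin := by
      rw [← LinearMap.ker_eq_bot, LinearMap.ker_eq_bot']
      intro x hx
      exact hinj x (by rwa [Matrix.mulVecLin_apply] at hx)
    have h2 : (NStar1 g pF RG0).rank =
        Module.finrank ℝ (LinearMap.range (NStar1 g pF RG0).mulVecLin) := rfl
    rw [h2, LinearMap.finrank_range_of_inj h1, Module.finrank_fintype_fun_eq_card]
    decide
  have hunit : IsUnit ((NStar1 g pF RG0)ᵀ * NStar1 g pF RG0) := by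
    have hNx : ∀ x, ((NStar1 g pF RG0)ᵀ * NStar1 g pF RG0) *ᵥ x = 0 → x = 0 := by
      intro x hx
      have h2 : x ⬝ᵥ (((NStar1 g pF RG0)ᵀ * NStar1 g pF RG0) *ᵥ x) = 0 := by
        rw [hx, dotProduct_zero]
      rw [← Matrix.mulVec_mulVec, dotProduct_mulVec, Matrix.vecMul_transpose] at h2
      exact hinj x (dotProduct_self_eq_zero.mp h2)
    rw [← Matrix.mulVec_injective_iff_isUnit]
    intro x y hxy
    have h3 := hNx (x - y) (by rw [Matrix.mulVec_sub, hxy, sub_self])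
    exact sub_eq_zero.mp h3
  refine ⟨hrank, hunit, fun t _ => ?_⟩
  have hdet := (Matrix.isUnit_iff_isUnit_det _).mp hunit
  refine ⟨?_, ?_, ?_⟩
  · rw [Matrix.mul_assoc, hPhi t, NStar1_eq_bmN]
    refine rowJac_mul_bmN _ _ _ _ ?_ ?_
    · simp [Fin.sum_univ_succ]
    · intro r
      fin_cases r <;> simp [Fin.sum_univ_succ, neg_mul, mul_neg, neg_neg]
  · have e1 : ((NStar1 g pF RG0)ᵀ * NStar1 g pF RG0)⁻¹ *
        ((NStar1 g pF RG0)ᵀ * NStar1 g pF RG0) = 1 := Matrix.nonsing_inv_mul _ hdet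
    simp only [Matrix.sub_mul, Matrix.mul_assoc, hPhi t]
    rw [e1, Matrix.mul_one, sub_self]
  · rw [Matrix.mul_assoc, hPhi t, NStar1_eq_bmN]
    refine rowJac_mul_bmN _ _ _ _ ?_ ?_
    · simp [Fin.sum_univ_succ]
    · intro r
      fin_cases r <;> simp [Fin.sum_univ_succ, neg_mul, mul_neg, neg_neg]
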